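/- Goga et al.'s lazy-evaluation observation: suppose a MEM starts at P[i], and let j ≥ i + L − 1 be an index such that j = m or MB[j+1] ≠ MB[j] + 1, and suppose MB[k+1] = MB[k] + 1 for all k with i + L − 1 ≤ k < j. Then every MEM of length at least L starting at a position in [i, j] includes position j (i.e., its interval contains j). -/

import Mathlib

open List

variable {α : Type*}

/-- `pseg P i j` is the substring `P[i..j]` (1-based, inclusive). -/
def pseg (P : List α) (i j : ℕ) : List α := (P.take j).drop (i - 1)

/-- `P[i..j]` is a MEM (maximal exact match) of `P` with respect to `T`. -/
def IsMEM (P T : List α) (i j : ℕ) : Prop :=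
  1 ≤ i ∧ i ≤ j ∧ j ≤ P.length ∧
  pseg P i j <:+: T ∧
  (i = 1 ∨ ¬ pseg P (i - 1) j <:+: T) ∧
  (j = P.length ∨ ¬ pseg P i (j + 1) <:+: T)

/-- The maximum length of a prefix of `Q` occurring as a substring of `T`. -/
noncomputable def lcpLen (Q T : List α) : ℕ :=
  sSup {l | l ≤ Q.length ∧ Q.take l <:+: T}

/-- The maximum length of a suffix of `Q` occurring as a substring of `T`. -/
noncomputable def lcsLen (Q T : List α) : ℕ :=
  sSup {l | l ≤ Q.length ∧ Q.drop (Q.length - l) <:+: T}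

/-- The length of the longest common suffix of `Q` and `R`. -/
noncomputable def lcsufLen (Q R : List α) : ℕ :=
  sSup {l | l ≤ Q.length ∧ l ≤ R.length ∧ Q.drop (Q.length - l) = R.drop (R.length - l)}

private lemma suffix_drop_eq {u Q : List α} (h : u <:+ Q) :
    Q.drop (Q.length - u.length) = u := by
  obtain ⟨s, rfl⟩ := h
  simp

private lemma le_lcsufLen' {Q R : List α} {l : ℕ} (h1 : l ≤ Q.length) (h2 : l ≤ R.length)
    (h3 : Q.drop (Q.length - l) = R.drop (R.length - l)) : l ≤ lcsufLen Q R :=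
  le_csSup ⟨Q.length, fun _ hx => hx.1⟩ ⟨h1, h2, h3⟩

private lemma lcsufLen_spec (Q R : List α) :
    lcsufLen Q R ≤ Q.length ∧ lcsufLen Q R ≤ R.length ∧
      Q.drop (Q.length - lcsufLen Q R) = R.drop (R.length - lcsufLen Q R) :=
  Nat.sSup_mem (s := {l | l ≤ Q.length ∧ l ≤ R.length ∧
      Q.drop (Q.length - l) = R.drop (R.length - l)})
    ⟨0, by simp⟩ ⟨Q.length, fun _ hx => hx.1⟩

private lemma infix_exists_take {u T : List α} (h : u <:+: T) :
    ∃ t ≤ T.length, u <:+ T.take t := by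
  obtain ⟨s, t, rfl⟩ := h
  refine ⟨(s ++ u).length, ?_, ?_⟩
  · rw [@List.length_append α (s ++ u) t]; exact Nat.le_add_right _ _
  · rw [List.take_left]
    exact List.suffix_append s u

private lemma suffix_take_infix {u T : List α} {t : ℕ} (h : u <:+ T.take t) : u <:+: T :=
  h.isInfix.trans (List.take_prefix t T).isInfix

/-- Goga et al.'s lazy-evaluation observation. -/
theorem lazy_evaluation (P T : List α) (MB : ℕ → ℕ) (L i j : ℕ)
    (hL : 1 ≤ L)
    (hocc : ∀ c ∈ P, [c] <:+: T)
    (hMB : ∀ k, 1 ≤ k → k ≤ P.length →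
      MB k ≤ T.length ∧
      ∀ t ≤ T.length, lcsufLen (P.take k) (T.take t) ≤ lcsufLen (P.take k) (T.take (MB k)))
    (hstart : ∃ j0, IsMEM P T i j0)
    (hj : i + L - 1 ≤ j) (hjm : j ≤ P.length)
    (hstop : j = P.length ∨ MB (j + 1) ≠ MB j + 1)
    (hrun : ∀ k, i + L - 1 ≤ k → k < j → MB (k + 1) = MB k + 1) :
    ∀ i' j', IsMEM P T i' j' → L ≤ j' - i' + 1 → i ≤ i' → i' ≤ j →
      i' ≤ j ∧ j ≤ j' := by
  intro i' j' hmem hlen hii' hi'j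
  refine ⟨hi'j, ?_⟩
  by_contra hcon
  push_neg at hcon
  obtain ⟨hi'1, hi'j', hj'P, hoccm, hleft, hright⟩ := hmem
  have hj'P' : j' < P.length := lt_of_lt_of_le hcon hjm
  have hMBstep : MB (j' + 1) = MB j' + 1 := hrun j' (by omega) hcon
  have hMBj' := hMB j' (le_trans hi'1 hi'j') (le_of_lt hj'P')
  have hMBj1 := hMB (j' + 1) (by omega) hj'P'
  set Q : List α := P.take j' with hQ
  set Q1 : List α := P.take (j' + 1) with hQ1
  set R : List α := T.take (MB j') with hR
  set R1 : List α := T.take (MB (j' + 1)) with hR1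
  have hQlen : Q.length = j' := by rw [hQ, List.length_take]; omega
  have hQ1len : Q1.length = j' + 1 := by rw [hQ1, List.length_take]; omega
  have hMBle : MB j' + 1 ≤ T.length := by rw [← hMBstep]; exact hMBj1.1
  have hRlen : R.length = MB j' := by rw [hR, List.length_take]; omega
  have hR1len : R1.length = MB j' + 1 := by rw [hR1, hMBstep, List.length_take]; omega
  have hMBlt : MB j' < T.length := by omega
  set b : ℕ := j' - i' + 1 with hb
  -- Step A : b ≤ lcsufLen Q R
  have hbg : b ≤ lcsufLen Q R := by
    obtain ⟨t0, ht0, hsuf⟩ := infix_exists_take hoccm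
    have hsegsuf : pseg P i' j' <:+ Q := List.drop_suffix _ _
    have hseglen : (pseg P i' j').length = b := by
      rw [pseg, List.length_drop, List.length_take]; omega
    have h1 : b ≤ lcsufLen Q (T.take t0) := by
      rw [← hseglen]
      exact le_lcsufLen' (Q := Q) hsegsuf.length_le hsuf.length_le
        ((suffix_drop_eq hsegsuf).trans (suffix_drop_eq hsuf).symm)
    exact h1.trans (hMBj'.2 t0 ht0)
  -- Step B : lcsufLen Q R ≤ b
  have hspec := lcsufLen_spec Q R
  have hgb : lcsufLen Q R ≤ b := by
    by_contra hgb'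
    push_neg at hgb'
    rcases hleft with h1 | h2
    · have := hspec.1
      rw [hQlen] at this
      omega
    · apply h2
      have hsuf : Q.drop (i' - 1 - 1) <:+ Q.drop (Q.length - lcsufLen Q R) := by
        have e : Q.drop (i' - 1 - 1)
            = (Q.drop (Q.length - lcsufLen Q R)).drop (i' - 1 - 1 - (Q.length - lcsufLen Q R)) := by
          rw [List.drop_drop]
          congr 1
          have := hspec.1
          omega
        rw [e]
        exact List.drop_suffix _ _
      have hinf : Q.drop (Q.length - lcsufLen Q R) <:+: T := by
        rw [hspec.2.2]
        exact suffix_take_infix (List.drop_suffix _ _)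
      exact hsuf.isInfix.trans hinf
  have hgeq : lcsufLen Q R = b := le_antisymm hgb hbg
  -- the one-character extensions
  have hc : Q1 = Q ++ [P[j']'hj'P'] := by
    rw [hQ1, hQ, ← List.take_concat_get hj'P', List.concat_eq_append]
  have hd : R1 = R ++ [T[MB j']'hMBlt] := by
    rw [hR1, hR, hMBstep, ← List.take_concat_get hMBlt, List.concat_eq_append]
  -- Step 3 : 1 ≤ lcsufLen Q1 R1
  have ha1 : 1 ≤ lcsufLen Q1 R1 := by
    obtain ⟨t1, ht1, hsuf1⟩ := infix_exists_take (hocc (P[j']'hj'P') (List.getElem_mem hj'P'))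
    have hcsuf : [P[j']'hj'P'] <:+ Q1 := ⟨Q, hc.symm⟩
    have e3 := suffix_drop_eq hcsuf
    have e4 := suffix_drop_eq hsuf1
    simp only [List.length_singleton] at e3 e4
    have h1 : (1 : ℕ) ≤ lcsufLen Q1 (T.take t1) :=
      le_lcsufLen' (Q := Q1) (R := T.take t1) (by omega)
        (by simpa using hsuf1.length_le) (e3.trans e4.symm)
    exact h1.trans (hMBj1.2 t1 ht1)
  -- Step 4 : the last characters agree
  have hspec1 := lcsufLen_spec Q1 R1
  have hlast : Q1.drop j' = R1.drop (MB j') := by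
    have e1 : (Q1.drop (Q1.length - lcsufLen Q1 R1)).drop (lcsufLen Q1 R1 - 1)
        = Q1.drop j' := by
      rw [List.drop_drop]
      congr 1
      have := hspec1.1
      omega
    have e2 : (R1.drop (R1.length - lcsufLen Q1 R1)).drop (lcsufLen Q1 R1 - 1)
        = R1.drop (MB j') := by
      rw [List.drop_drop]
      congr 1
      have := hspec1.2.1
      omega
    rw [← e1, ← e2, hspec1.2.2]
  have hcd : (P[j']'hj'P') = (T[MB j']'hMBlt) := by
    have e1 : Q1.drop j' = [P[j']'hj'P'] := by
      rw [hc]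
      exact List.drop_left' hQlen
    have e2 : R1.drop (MB j') = [T[MB j']'hMBlt] := by
      rw [hd]
      exact List.drop_left' hRlen
    rw [e1, e2] at hlast
    simpa using hlast
  -- Step 5 : extend the common suffix by one character
  have hbMB : b ≤ MB j' := by
    have := hspec.2.1
    rw [hRlen] at this
    omega
  have key : Q.drop (j' - b) = R.drop (MB j' - b) := by
    have e := hspec.2.2
    rw [hgeq, hQlen, hRlen] at e
    exact e
  have key1 : Q1.drop (j' - b) = R1.drop (MB j' - b) := by
    rw [hc, hd, List.drop_append, List.drop_append,
      hQlen, hRlen]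
    have e1 : j' - b - j' = 0 := by omega
    have e2 : MB j' - b - MB j' = 0 := by omega
    rw [e1, e2, List.drop_zero, List.drop_zero, hcd, key]
  have hfinal : pseg P i' (j' + 1) <:+: T := by
    have e : pseg P i' (j' + 1) = Q1.drop (j' - b) := by
      rw [pseg, ← hQ1]
      congr 1
      omega
    have hsfx : R1.drop (MB j' - b) <:+ T.take (MB (j' + 1)) := by
      rw [hR1]
      exact List.drop_suffix _ _
    rw [e, key1]
    exact suffix_take_infix hsfx
  rcases hright with h1 | h2
  · omega
  · exact h2 hfinal
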